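/- Let h ≥ k ≥ 1 be integers. There exists a polynomial p_{k,h}(t) ∈ ℤ[t], depending only on k and h, such that for every matroid M of rank k, every stressed hyperplane H of M with |H| = h, and the relaxation M̃ of M at H, one has P_{M̃}(t) = P_M(t) + p_{k,h}(t). -/

import Mathlib

open Polynomial Matroid Set

namespace KLPaper

variable {α : Type} [Fintype α]

/-- The contraction `M ⧸ C` of a set `C` in a matroid `M`, defined (as is standard,
see e.g. Oxley, Prop. 3.1.1) as the dual of the deletion of `C` from the dual matroid,
where deletion of `C` is restriction to `M.E \ C`.  Its ground set is `M.E \ C`. -/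
noncomputable def contract (M : Matroid α) (C : Set α) : Matroid α :=
  (M✶ ↾ (M.E \ C))✶

scoped infixl:75 " ⧸ " => KLPaper.contract

/-- The rank `rk M S` of a set `S` in a matroid `M`: the largest cardinality of an
independent subset of `S`. -/
noncomputable def rk (M : Matroid α) (S : Set α) : ℕ :=
  sSup {n | ∃ I, I ⊆ S ∧ M.Indep I ∧ I.ncard = n}

/-- The rank of a matroid: the rank of its ground set. -/
noncomputable def rank (M : Matroid α) : ℕ := rk M M.E

/-- A circuit of a matroid: a minimal dependent set, i.e. a dependent subset of the
ground set all of whose proper subsets are independent. -/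
def IsCircuit (M : Matroid α) (C : Set α) : Prop :=
  M.Dep C ∧ ∀ D ⊂ C, M.Indep D

/-- A hyperplane of a matroid: a maximal proper flat. -/
def IsHyperplane (M : Matroid α) (H : Set α) : Prop :=
  M.IsFlat H ∧ H ≠ M.E ∧ ∀ F, M.IsFlat F → H ⊂ F → F = M.E

/-- A stressed hyperplane of a matroid `M` of rank `k`: a hyperplane `H` such that every
`k`-element subset of `H` is a circuit of `M`. -/
def Stressed (M : Matroid α) (H : Set α) : Prop :=
  IsHyperplane M H ∧ ∀ C ⊆ H, C.ncard = rank M → IsCircuit M C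

/-- `Mt` is the relaxation of `M` at the stressed hyperplane `H`: the matroid on the same
ground set whose bases are exactly the bases of `M` together with all `(rank M)`-element
subsets of `H`. -/
def IsRelaxation (M Mt : Matroid α) (H : Set α) : Prop :=
  Mt.E = M.E ∧ ∀ B : Set α, Mt.IsBase B ↔ (M.IsBase B ∨ (B ⊆ H ∧ B.ncard = rank M))

/-- The characterization of the Kazhdan–Lusztig polynomials `P_M` and the `Z`-polynomials
`Z_M` of matroids (on a fixed finite type): (i) both equal `1` on matroids with empty
ground set; (ii) `2 · deg P_M < rk M` when the ground set is nonempty (the zero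
polynomial being allowed); (iii) `Z_M` is palindromic of degree `rk M`;
(iv) `Z_M = Σ_{S ⊆ E} t^{rk S} · P_{M ⧸ S}`, the sum over all subsets `S` of `E`. -/
def PZaxioms (P Z : Matroid α → Polynomial ℤ) : Prop :=
  (∀ M : Matroid α, M.E = ∅ → P M = 1 ∧ Z M = 1) ∧
  (∀ M : Matroid α, M.E ≠ ∅ → (P M = 0 ∨ 2 * (P M).natDegree < rank M)) ∧
  (∀ M : Matroid α, (Z M).natDegree ≤ rank M ∧
      ∀ i ≤ rank M, (Z M).coeff i = (Z M).coeff (rank M - i)) ∧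
  (∀ M : Matroid α,
      Z M = ∑ S ∈ M.E.toFinite.toFinset.powerset,
        X ^ (rk M (S : Set α)) * P (M ⧸ (S : Set α)))

section RkAPI

variable {M : Matroid α} {S T I J B F X : Set α} {e x : α}

lemma rk_bdd (M : Matroid α) (S : Set α) :
    BddAbove {n | ∃ I, I ⊆ S ∧ M.Indep I ∧ I.ncard = n} := by
  refine ⟨Fintype.card α, ?_⟩
  rintro n ⟨I, -, -, rfl⟩
  have := Set.ncard_le_ncard (Set.subset_univ I) Set.finite_univ
  simpa [Set.ncard_univ] using this

lemma le_rk (hIS : I ⊆ S) (hI : M.Indep I) : I.ncard ≤ rk M S :=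
  le_csSup (rk_bdd M S) ⟨I, hIS, hI, rfl⟩

lemma rk_spec (M : Matroid α) (S : Set α) :
    ∃ I, I ⊆ S ∧ M.Indep I ∧ I.ncard = rk M S := by
  have hne : {n | ∃ I, I ⊆ S ∧ M.Indep I ∧ I.ncard = n}.Nonempty :=
    ⟨0, ∅, Set.empty_subset _, M.empty_indep, by simp⟩
  exact Nat.sSup_mem hne (rk_bdd M S)

lemma rk_le (h : ∀ I, I ⊆ S → M.Indep I → I.ncard ≤ n) : rk M S ≤ n := by
  obtain ⟨I, h1, h2, h3⟩ := rk_spec M S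
  rw [← h3]; exact h I h1 h2

lemma Basis'_ncard (h : M.IsBasis' I S) : I.ncard = rk M S := by
  refine le_antisymm (le_rk h.subset h.indep) (rk_le fun J hJS hJ ↦ ?_)
  by_contra hlt
  push_neg at hlt
  have he : I.encard < J.encard := by
    rw [(Set.toFinite I).encard_eq_coe_toFinset_card, (Set.toFinite J).encard_eq_coe_toFinset_card]
    rw [← Set.ncard_eq_toFinset_card, ← Set.ncard_eq_toFinset_card]
    exact_mod_cast hlt
  obtain ⟨e, he, hins⟩ := h.indep.augment hJ he
  exact h.insert_not_indep ⟨hJS he.1, he.2⟩ hins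

lemma Basis_ncard (h : M.IsBasis I S) : I.ncard = rk M S := Basis'_ncard h.isBasis'

lemma indep_rk_self (h : M.Indep I) : rk M I = I.ncard := (Basis_ncard h.isBasis_self).symm

lemma rk_mono (M : Matroid α) (h : S ⊆ T) : rk M S ≤ rk M T :=
  rk_le fun I hIS hI ↦ le_rk (hIS.trans h) hI

lemma rk_le_ncard (M : Matroid α) (S : Set α) : rk M S ≤ S.ncard :=
  rk_le fun I hIS _ ↦ Set.ncard_le_ncard hIS (Set.toFinite S)

@[simp] lemma rk_empty (M : Matroid α) : rk M ∅ = 0 :=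
  Nat.le_zero.mp <| by simpa using rk_le_ncard M ∅

lemma base_ncard (h : M.IsBase B) : B.ncard = rank M := Basis_ncard h.isBasis_ground

lemma indep_ncard_le_rank (h : M.Indep I) : I.ncard ≤ rank M := le_rk h.subset_ground h

lemma rk_le_rank (M : Matroid α) (h : S ⊆ M.E) : rk M S ≤ rank M := rk_mono M h

lemma base_of_ncard_rank (h : M.Indep I) (hc : I.ncard = rank M) : M.IsBase I := by
  obtain ⟨B, hB, hIB⟩ := h.exists_isBase_superset
  have hIB' : I = B :=
    Set.eq_of_subset_of_ncard_le hIB (by rw [hc, base_ncard hB]) (Set.toFinite B)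
  rwa [hIB']

lemma rank_eq_zero_base_empty (h : rank M = 0) : M.IsBase ∅ := by
  obtain ⟨B, hB⟩ := M.exists_isBase
  have hB0 : B.ncard = 0 := by rw [base_ncard hB, h]
  rw [Set.ncard_eq_zero (Set.toFinite B)] at hB0
  rwa [hB0] at hB

lemma rk_closure_eq (M : Matroid α) (hX : X ⊆ M.E) : rk M (M.closure X) = rk M X := by
  obtain ⟨I, hI⟩ := M.exists_isBasis X hX
  rw [← Basis_ncard hI, ← Basis_ncard hI.isBasis_closure_right]

lemma rk_insert_le (M : Matroid α) (e : α) (S : Set α) :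
    rk M (insert e S) ≤ rk M S + 1 := by
  refine rk_le fun I hIS hI ↦ ?_
  have h1 : I \ {e} ⊆ S := by
    intro x hx; rcases hIS hx.1 with h | h
    · exact absurd h hx.2
    · exact h
  have h2 : (I \ {e}).ncard ≤ rk M S := le_rk h1 (hI.diff _)
  rcases em (e ∈ I) with he | he
  · have h3 := Set.ncard_diff_singleton_add_one he (Set.toFinite I)
    omega
  · rw [Set.diff_singleton_eq_self he] at h2
    omega

lemma mem_closure_iff_rk (hX : X ⊆ M.E) (he : e ∈ M.E) :
    e ∈ M.closure X ↔ rk M (insert e X) = rk M X := by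
  obtain ⟨I, hI⟩ := M.exists_isBasis X hX
  constructor
  · intro h
    refine le_antisymm ?_ (rk_mono M (Set.subset_insert _ _))
    have h1 : insert e X ⊆ M.closure X :=
      Set.insert_subset h (M.subset_closure X hX)
    calc rk M (insert e X) ≤ rk M (M.closure X) := rk_mono M h1
    _ = rk M X := rk_closure_eq M hX
  · intro h
    by_contra hcl
    have heI : e ∉ I := fun hh ↦ hcl (M.subset_closure X hX (hI.subset hh))
    have : M.Indep (insert e I) := by
      rw [hI.indep.insert_indep_iff_of_notMem heI, hI.closure_eq_closure]
      exact ⟨he, hcl⟩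
    have h2 : (insert e I).ncard ≤ rk M (insert e X) :=
      le_rk (Set.insert_subset_insert hI.subset) this
    rw [Set.ncard_insert_of_notMem heI (Set.toFinite I), Basis_ncard hI] at h2
    omega

lemma flat_closure (M : Matroid α) (X : Set α) : M.IsFlat (M.closure X) := by
  refine ⟨fun I Y hI hIY ↦ ?_, M.closure_subset_ground X⟩
  have h1 : M.closure I = M.closure (M.closure X) := hI.closure_eq_closure
  rw [M.closure_closure] at h1
  exact hIY.subset_closure.trans (by rw [h1])

lemma flat_iff_closure_self : M.IsFlat F ↔ F ⊆ M.E ∧ M.closure F = F := by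
  constructor
  · exact fun h ↦ ⟨h.subset_ground, h.closure⟩
  · rintro ⟨h1, h2⟩; rw [← h2]; exact flat_closure M F

lemma rk_eq_zero_iff (hS : S ⊆ M.E) : rk M S = 0 ↔ S ⊆ M.closure ∅ := by
  constructor
  · intro h x hx
    by_contra hxc
    have : M.Indep {x} := by
      rw [show ({x} : Set α) = insert x ∅ by simp,
        M.empty_indep.insert_indep_iff_of_notMem (by simp)]
      exact ⟨hS hx, hxc⟩
    have := le_rk (Set.singleton_subset_iff.mpr hx) this
    simp [h] at this
  · intro h
    refine Nat.le_zero.mp (rk_le fun I hIS hI ↦ ?_)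
    rcases Set.eq_empty_or_nonempty I with rfl | ⟨x, hx⟩
    · simp
    · exfalso
      have hxc : x ∈ M.closure ∅ := h (hIS hx)
      have : M.Indep {x} := hI.subset (Set.singleton_subset_iff.mpr hx)
      rw [show ({x} : Set α) = insert x ∅ by simp,
        M.empty_indep.insert_indep_iff_of_notMem (by simp)] at this
      exact this.2 hxc

end RkAPI

section ContractAPI

variable {M : Matroid α} {S T I J B F X : Set α} {e x : α}

@[simp] lemma contract_ground (M : Matroid α) (S : Set α) : (M ⧸ S).E = M.E \ S := rfl

lemma contract_empty (M : Matroid α) : (M ⧸ (∅ : Set α)) = M := by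
  show (M✶ ↾ (M.E \ ∅))✶ = M
  rw [Set.diff_empty, ← Matroid.dual_ground, Matroid.restrict_ground_eq_self,
    Matroid.dual_dual]

lemma contract_base_iff (hS : S ⊆ M.E) :
    (M ⧸ S).IsBase B ↔ B ⊆ M.E \ S ∧ ∃ J, M.IsBasis J S ∧ M.IsBase (B ∪ J) := by
  set R := M.E \ S with hR
  have hRE : R ⊆ M✶.E := Set.diff_subset
  have hERS : M.E \ R = S := Set.diff_diff_cancel_left hS
  constructor
  · intro h
    have hBR : B ⊆ R := h.subset_ground
    rw [contract, Matroid.dual_isBase_iff (by simpa using hBR)] at h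
    rw [Matroid.isBase_restrict_iff hRE] at h
    simp only [Matroid.restrict_ground_eq] at h
    -- h : M✶.IsBasis (R \ B) R
    obtain ⟨D, hD, hRBD⟩ := h.indep.exists_isBase_superset
    have hDR : R \ B = D ∩ R :=
      h.eq_of_subset_indep (hD.indep.inter_right R) (Set.subset_inter hRBD Set.diff_subset)
        Set.inter_subset_right
    have hbas : M✶.IsBasis (D ∩ R) R := hDR ▸ h
    have key := (Matroid.IsBase.inter_isBasis_iff_compl_inter_isBasis_dual hD (X := R) hRE).mp hbas
    rw [Matroid.dual_dual, Matroid.dual_ground, hERS] at key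
    -- key : M.IsBasis ((M.E \ D) ∩ S) S
    refine ⟨hBR, (M.E \ D) ∩ S, key, ?_⟩
    have hB0 : M.IsBase (M.E \ D) := hD.compl_isBase_of_dual
    have : B ∪ (M.E \ D) ∩ S = M.E \ D := by
      have h1 : (M.E \ D) ∩ R = B := by
        rw [hDR] at h
        have : (M.E \ D) ∩ R = R \ D := by
          ext y; simp only [Set.mem_inter_iff, Set.mem_diff, hR]; tauto
        rw [this]
        have : R \ D = R \ (D ∩ R) := by
          ext y; simp only [Set.mem_diff, Set.mem_inter_iff]; tauto
        rw [this, ← hDR]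
        ext y; simp only [Set.mem_diff]
        constructor
        · rintro ⟨hy, hy2⟩; by_contra hyB; exact hy2 ⟨hy, hyB⟩
        · intro hy; exact ⟨hBR hy, fun hh ↦ hh.2 hy⟩
      have h2 : M.E \ D ⊆ R ∪ S := by
        intro y hy
        rcases em (y ∈ S) with h | h
        · exact Or.inr h
        · exact Or.inl ⟨hy.1, h⟩
      ext y
      constructor
      · rintro (hy | hy)
        · rw [← h1] at hy; exact hy.1
        · exact hy.1
      · intro hy
        rcases h2 hy with h | h
        · exact Or.inl (h1 ▸ ⟨hy, h⟩)
        · exact Or.inr ⟨hy, h⟩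
    rw [this]; exact hB0
  · rintro ⟨hBR, J, hJ, hB0⟩
    have hJS : J ⊆ S := hJ.subset
    have hBS : Disjoint B S := Set.disjoint_of_subset_left hBR Set.disjoint_sdiff_left
    have hJB : (B ∪ J) ∩ S = J := by
      ext y; simp only [Set.mem_inter_iff, Set.mem_union]
      constructor
      · rintro ⟨hy | hy, hyS⟩
        · exact absurd hyS (Set.disjoint_left.mp hBS hy)
        · exact hy
      · intro hy; exact ⟨Or.inr hy, hJS hy⟩
    have key := (Matroid.IsBase.inter_isBasis_iff_compl_inter_isBasis_dual hB0 (X := S) hS).mp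
      (by rw [hJB]; exact hJ)
    rw [← hR] at key
    have hRB : (M.E \ (B ∪ J)) ∩ R = R \ B := by
      ext y
      simp only [Set.mem_inter_iff, Set.mem_diff, Set.mem_union, hR]
      constructor
      · rintro ⟨⟨hy, hy2⟩, -, hyS⟩; exact ⟨⟨hy, hyS⟩, fun h ↦ hy2 (Or.inl h)⟩
      · rintro ⟨⟨hy, hyS⟩, hyB⟩
        exact ⟨⟨hy, fun h ↦ h.elim hyB (fun hj ↦ hyS (hJS hj))⟩, hy, hyS⟩
    rw [hRB] at key
    rw [contract, Matroid.dual_isBase_iff (by simpa using hBR), Matroid.isBase_restrict_iff hRE]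
    exact key

lemma contract_indep_iff (hS : S ⊆ M.E) :
    (M ⧸ S).Indep I ↔ I ⊆ M.E \ S ∧ ∃ J, M.IsBasis J S ∧ M.Indep (I ∪ J) := by
  constructor
  · intro h
    obtain ⟨B, hB, hIB⟩ := h.exists_isBase_superset
    rw [contract_base_iff hS] at hB
    obtain ⟨hBR, J, hJ, hB0⟩ := hB
    exact ⟨h.subset_ground, J, hJ, hB0.indep.subset (Set.union_subset_union_left J hIB)⟩
  · rintro ⟨hIR, J, hJ, hIJ⟩
    obtain ⟨B0, hB0, hIJB0⟩ := hIJ.exists_isBase_superset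
    have hJB0 : J = B0 ∩ S :=
      hJ.eq_of_subset_indep (hB0.indep.inter_right S)
        (Set.subset_inter ((Set.subset_union_right).trans hIJB0) hJ.subset)
        Set.inter_subset_right
    have hBbase : (M ⧸ S).IsBase (B0 \ S) := by
      rw [contract_base_iff hS]
      refine ⟨Set.diff_subset_diff_left hB0.subset_ground, J, hJ, ?_⟩
      have : B0 \ S ∪ J = B0 := by
        rw [hJB0]
        ext y; simp only [Set.mem_union, Set.mem_diff, Set.mem_inter_iff]
        constructor
        · rintro (⟨h1, -⟩ | ⟨h1, -⟩) <;> exact h1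
        · intro hy
          rcases em (y ∈ S) with h | h
          · exact Or.inr ⟨hy, h⟩
          · exact Or.inl ⟨hy, h⟩
      rwa [this]
    refine Matroid.Indep.subset hBbase.indep ?_
    intro y hy
    exact ⟨hIJB0 (Or.inl hy), (hIR hy).2⟩

lemma contract_base_iff_of_indep (hS : M.Indep S) :
    (M ⧸ S).IsBase B ↔ B ⊆ M.E \ S ∧ M.IsBase (B ∪ S) := by
  rw [contract_base_iff hS.subset_ground]
  constructor
  · rintro ⟨h1, J, hJ, h2⟩
    rw [hS.eq_of_isBasis hJ] at h2
    exact ⟨h1, h2⟩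
  · rintro ⟨h1, h2⟩
    exact ⟨h1, S, hS.isBasis_self, h2⟩

lemma contract_indep_iff_of_indep (hS : M.Indep S) :
    (M ⧸ S).Indep I ↔ I ⊆ M.E \ S ∧ M.Indep (I ∪ S) := by
  rw [contract_indep_iff hS.subset_ground]
  constructor
  · rintro ⟨h1, J, hJ, h2⟩
    rw [hS.eq_of_isBasis hJ] at h2
    exact ⟨h1, h2⟩
  · rintro ⟨h1, h2⟩
    exact ⟨h1, S, hS.isBasis_self, h2⟩

lemma rank_contract_add (hS : S ⊆ M.E) : rank (M ⧸ S) + rk M S = rank M := by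
  obtain ⟨B, hB⟩ := (M ⧸ S).exists_isBase
  have hBc := hB
  rw [contract_base_iff hS] at hB
  obtain ⟨hBR, J, hJ, hB0⟩ := hB
  have hd : Disjoint B J :=
    Set.disjoint_of_subset hBR hJ.subset Set.disjoint_sdiff_left
  have h1 : (B ∪ J).ncard = B.ncard + J.ncard :=
    Set.ncard_union_eq hd (Set.toFinite B) (Set.toFinite J)
  have h2 := base_ncard hB0
  have h3 := base_ncard (M := M ⧸ S) hBc
  have h4 := Basis_ncard hJ
  omega

lemma rk_contract_add (hS : S ⊆ M.E) (hX : X ⊆ M.E \ S) :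
    rk (M ⧸ S) X + rk M S = rk M (X ∪ S) := by
  have hXE : X ∪ S ⊆ M.E := Set.union_subset (hX.trans Set.diff_subset) hS
  obtain ⟨J, K, hJ, hK, hJK⟩ := M.exists_isBasis_subset_isBasis (Set.subset_union_right (s := X)) hXE
  have hKS : K ∩ S = J := by
    refine (hJ.eq_of_subset_indep (hK.indep.inter_right S)
      (Set.subset_inter hJK hJ.subset) Set.inter_subset_right).symm
  have hKJX : K \ J ⊆ X := by
    intro y hy
    rcases hK.subset hy.1 with h | h
    · exact h
    · have : y ∈ J := by rw [← hKS]; exact ⟨hy.1, h⟩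
      exact absurd this hy.2
  -- K \ J is (M ⧸ S)-independent
  have hKJi : (M ⧸ S).Indep (K \ J) := by
    rw [contract_indep_iff hS]
    refine ⟨fun y hy ↦ ⟨hK.indep.subset_ground hy.1, fun hyS ↦ hy.2 (hKS ▸ ⟨hy.1, hyS⟩)⟩,
      J, hJ, ?_⟩
    rw [Set.diff_union_of_subset hJK]
    exact hK.indep
  -- upper bound: any (M ⧸ S)-independent subset of X unions with J to an indep set
  have hub : rk (M ⧸ S) X ≤ rk M (X ∪ S) - rk M S := by
    refine rk_le fun I hIX hI ↦ ?_
    rw [contract_indep_iff hS] at hI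
    obtain ⟨hIR, J', hJ', hIJ'⟩ := hI
    have hle : (I ∪ J').ncard ≤ rk M (X ∪ S) :=
      le_rk (Set.union_subset (hIX.trans Set.subset_union_left)
        (hJ'.subset.trans Set.subset_union_right)) hIJ'
    have hd : Disjoint I J' :=
      Set.disjoint_of_subset hIR hJ'.subset Set.disjoint_sdiff_left
    have := Set.ncard_union_eq hd (Set.toFinite I) (Set.toFinite J')
    have h4 := Basis_ncard hJ'
    omega
  have hlb : (K \ J).ncard ≤ rk (M ⧸ S) X := le_rk hKJX hKJi
  have h5 : (K \ J).ncard = K.ncard - J.ncard := Set.ncard_diff hJK (Set.toFinite J)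
  have h6 := Basis_ncard hJ
  have h7 := Basis_ncard hK
  have h8 : J.ncard ≤ K.ncard := Set.ncard_le_ncard hJK (Set.toFinite K)
  have h9 : rk M S ≤ rk M (X ∪ S) := rk_mono M Set.subset_union_right
  omega

lemma closure_contract (hS : S ⊆ M.E) (hX : X ⊆ M.E \ S) :
    (M ⧸ S).closure X = M.closure (X ∪ S) \ S := by
  have hXE : X ∪ S ⊆ M.E := Set.union_subset (hX.trans Set.diff_subset) hS
  ext e
  rcases em (e ∈ M.E \ S) with he | he
  · rw [Set.mem_diff]
    have h1 : e ∈ (M ⧸ S).closure X ↔ rk (M ⧸ S) (insert e X) = rk (M ⧸ S) X :=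
      mem_closure_iff_rk (M := M ⧸ S) (by simpa using hX) (by simpa using he)
    have h2 : e ∈ M.closure (X ∪ S) ↔ rk M (insert e (X ∪ S)) = rk M (X ∪ S) :=
      mem_closure_iff_rk hXE he.1
    have h3 := rk_contract_add hS hX
    have h4 := rk_contract_add hS (Set.insert_subset he hX)
    rw [Set.insert_union] at h4
    rw [h1, h2]
    constructor
    · intro h; exact ⟨by omega, he.2⟩
    · rintro ⟨h, -⟩; omega
  · constructor
    · intro h
      exact absurd ((M ⧸ S).closure_subset_ground X h) he
    · rintro ⟨h1, h2⟩
      exact absurd ⟨M.mem_ground_of_mem_closure h1, h2⟩ he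

lemma flat_contract (hS : S ⊆ M.E) (hF : M.IsFlat F) (hSF : S ⊆ F) :
    (M ⧸ S).IsFlat (F \ S) := by
  rw [flat_iff_closure_self]
  refine ⟨Set.diff_subset_diff_left hF.subset_ground, ?_⟩
  rw [closure_contract hS (Set.diff_subset_diff_left hF.subset_ground),
    Set.diff_union_of_subset hSF, hF.closure]

end ContractAPI


section Extraction

open scoped Classical

noncomputable def Phi (k : ℕ) (q : Polynomial ℤ) : Polynomial ℤ :=
  ∑ i ∈ Finset.range ((k + 1) / 2), Polynomial.C (q.coeff (k - i) - q.coeff i) * X ^ i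

lemma Phi_coeff (k : ℕ) (q : Polynomial ℤ) (i : ℕ) :
    (Phi k q).coeff i = if 2 * i < k then q.coeff (k - i) - q.coeff i else 0 := by
  rw [Phi, finset_sum_coeff]
  simp only [coeff_C_mul, coeff_X_pow]
  rcases em (2 * i < k) with h | h
  · rw [Finset.sum_eq_single i]
    · simp [h]
    · intro j _ hj
      have : ¬ (i = j) := fun hh ↦ hj hh.symm
      simp [this]
    · intro hi
      exact absurd (Finset.mem_range.mpr (by omega)) hi
  · rw [if_neg h]
    apply Finset.sum_eq_zero
    intro j hj
    rw [Finset.mem_range] at hj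
    have : ¬ (i = j) := by omega
    simp [this]

lemma Phi_sub (k : ℕ) (q r : Polynomial ℤ) : Phi k (q - r) = Phi k q - Phi k r := by
  ext i
  simp only [Phi_coeff, coeff_sub]
  split <;> ring

variable {P Z : Matroid α → Polynomial ℤ}

lemma P_empty (hPZ : PZaxioms P Z) (M : Matroid α) (h : M.E = ∅) : P M = 1 := (hPZ.1 M h).1

lemma Z_eq (hPZ : PZaxioms P Z) (M : Matroid α) :
    Z M = P M + ∑ S ∈ (M.E.toFinite.toFinset.powerset).erase ∅,
      X ^ (rk M (S : Set α)) * P (M ⧸ (S : Set α)) := by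
  rw [hPZ.2.2.2 M, ← Finset.add_sum_erase _ _ (Finset.empty_mem_powerset _)]
  simp [contract_empty]

lemma P_coeff_high (hPZ : PZaxioms P Z) (M : Matroid α) (hME : M.E ≠ ∅) (i : ℕ)
    (hi : rank M ≤ 2 * i) : (P M).coeff i = 0 := by
  rcases hPZ.2.1 M hME with h | h
  · simp [h]
  · exact coeff_eq_zero_of_natDegree_lt (by omega)

lemma P_eq_Phi (hPZ : PZaxioms P Z) (M : Matroid α) (hME : M.E ≠ ∅) :
    P M = Phi (rank M) (∑ S ∈ (M.E.toFinite.toFinset.powerset).erase ∅,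
      X ^ (rk M (S : Set α)) * P (M ⧸ (S : Set α))) := by
  set k := rank M with hk
  set Q := ∑ S ∈ (M.E.toFinite.toFinset.powerset).erase ∅,
      X ^ (rk M (S : Set α)) * P (M ⧸ (S : Set α)) with hQdef
  have hZ : Z M = P M + Q := Z_eq hPZ M
  have hpal : ∀ i ≤ k, (Z M).coeff i = (Z M).coeff (k - i) := (hPZ.2.2.1 M).2
  ext i
  rw [Phi_coeff]
  rcases em (2 * i < k) with h | h
  · rw [if_pos h]
    have h1 := hpal i (by omega)
    have h2 : (P M).coeff (k - i) = 0 := P_coeff_high hPZ M hME (k - i) (by omega)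
    rw [hZ] at h1
    simp only [coeff_add] at h1
    rw [h2] at h1
    linarith
  · rw [if_neg h]
    exact P_coeff_high hPZ M hME i (by omega)

lemma P_rank_zero (hPZ : PZaxioms P Z) (M : Matroid α) (hME : M.E ≠ ∅) (h : rank M = 0) :
    P M = 0 := by
  rcases hPZ.2.1 M hME with h' | h'
  · exact h'
  · rw [h] at h'
    exact absurd h' (by omega)

lemma P_rank_one (hPZ : PZaxioms P Z) :
    ∀ n (M : Matroid α), M.E.ncard ≤ n → rank M = 1 → M.E ≠ ∅ →
      P M = if M.closure ∅ = ∅ then 1 else 0 := by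
  intro n
  induction n with
  | zero =>
    intro M hn h1 hne
    rw [Nat.le_zero, Set.ncard_eq_zero (Set.toFinite _)] at hn
    exact absurd hn hne
  | succ n ih =>
    intro M hn hrk hne
    set L := M.closure ∅ with hLdef
    have hLE : L ⊆ M.E := M.closure_subset_ground ∅
    set Q := ∑ S ∈ (M.E.toFinite.toFinset.powerset).erase ∅,
      X ^ (rk M (S : Set α)) * P (M ⧸ (S : Set α)) with hQdef
    have hPM : P M = Phi 1 Q := by
      have := P_eq_Phi hPZ M hne
      rwa [hrk] at this
    have hPhi1 : Phi 1 Q = Polynomial.C (Q.coeff 1 - Q.coeff 0) := by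
      rw [Phi]
      norm_num
    -- basic facts about index sets
    have hmem : ∀ S : Finset α, S ∈ (M.E.toFinite.toFinset.powerset).erase ∅ →
        (S : Set α) ⊆ M.E ∧ S ≠ ∅ := by
      intro S hS
      rw [Finset.mem_erase, Finset.mem_powerset] at hS
      refine ⟨?_, hS.1⟩
      intro x hx
      have := hS.2 hx
      rwa [Set.Finite.mem_toFinset] at this
    have hrkle : ∀ S : Finset α, (S : Set α) ⊆ M.E → rk M (S : Set α) ≤ 1 := by
      intro S hS
      rw [← hrk]
      exact rk_le_rank M hS
    -- ground set of contraction nonempty unless S = E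
    have hgne : ∀ S : Finset α, (S : Set α) ⊆ M.E → (S : Set α) ≠ M.E → (M ⧸ (S : Set α)).E ≠ ∅ := by
      intro S h1 h2
      rw [contract_ground]
      intro hdiff
      rw [Set.diff_eq_empty] at hdiff
      exact h2 (le_antisymm h1 hdiff)
    -- rank-1 contractions with S of rank 0
    have hcontr0 : ∀ S : Finset α, (S : Set α) ⊆ M.E → S ≠ ∅ → rk M (S : Set α) = 0 →
        P (M ⧸ (S : Set α)) = if (S : Set α) = L then 1 else 0 := by
      intro S h1 h2 h3
      have hSL : (S : Set α) ⊆ L := (rk_eq_zero_iff h1).mp h3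
      have hSne : (S : Set α) ≠ M.E := by
        intro hh
        rw [hh] at h3
        rw [show rk M M.E = rank M from rfl, hrk] at h3
        omega
      have hrc : rank (M ⧸ (S : Set α)) = 1 := by
        have := rank_contract_add (M := M) h1
        omega
      have hclS : M.closure (S : Set α) = L := by
        apply le_antisymm
        · have h5 : M.closure (S : Set α) ⊆ M.closure L := M.closure_subset_closure hSL
          rwa [hLdef, M.closure_closure] at h5
        · exact M.closure_subset_closure (Set.empty_subset _)
      have hloops : (M ⧸ (S : Set α)).closure ∅ = L \ (S : Set α) := by
        rw [closure_contract h1 (by simp), Set.empty_union, hclS]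
      have hcard : (M ⧸ (S : Set α)).E.ncard ≤ n := by
        rw [contract_ground, Set.ncard_diff h1 (Set.toFinite _)]
        have h6 : (S : Set α).ncard = S.card := Set.ncard_coe_finset S
        have h7 : 1 ≤ S.card := Finset.card_pos.mpr (Finset.nonempty_iff_ne_empty.mpr h2)
        omega
      have := ih (M ⧸ (S : Set α)) hcard hrc (hgne S h1 hSne)
      rw [this, hloops]
      have : L \ (S : Set α) = ∅ ↔ (S : Set α) = L := by
        rw [Set.diff_eq_empty]
        exact ⟨fun h ↦ le_antisymm hSL h, fun h ↦ h.ge⟩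
      simp only [this]
    -- rank-1 contractions with S of rank 1, S ≠ E
    have hcontr1 : ∀ S : Finset α, (S : Set α) ⊆ M.E → rk M (S : Set α) = 1 →
        (S : Set α) ≠ M.E → P (M ⧸ (S : Set α)) = 0 := by
      intro S h1 h3 h4
      have hrc : rank (M ⧸ (S : Set α)) = 0 := by
        have := rank_contract_add (M := M) h1
        omega
      exact P_rank_zero hPZ _ (hgne S h1 h4) hrc
    -- value of P at full ground set contraction
    have hPE : P (M ⧸ M.E) = 1 := by
      apply P_empty hPZ
      simp [contract_ground]
    have hEmem : M.E.toFinite.toFinset ∈ (M.E.toFinite.toFinset.powerset).erase ∅ := by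
      rw [Finset.mem_erase, Finset.mem_powerset]
      refine ⟨?_, le_refl _⟩
      rw [Ne, Set.Finite.toFinset_eq_empty]
      exact hne
    have hcoe : ((M.E.toFinite.toFinset : Finset α) : Set α) = M.E := Set.Finite.coe_toFinset _
    -- coefficient one of Q
    have hQ1 : Q.coeff 1 = 1 := by
      rw [hQdef, finset_sum_coeff]
      rw [Finset.sum_eq_single_of_mem _ hEmem]
      · rw [hcoe, show rk M M.E = rank M from rfl, hrk, pow_one, hPE]
        simp
      · intro S hS hSne
        obtain ⟨h1, h2⟩ := hmem S hS
        have hSE : (S : Set α) ≠ M.E := by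
          intro hh
          apply hSne
          apply Finset.coe_injective
          rw [hh, hcoe]
        have := hrkle S h1
        interval_cases hr : rk M (S : Set α)
        · rw [pow_zero, one_mul]
          apply P_coeff_high hPZ _ (hgne S h1 hSE)
          have := rank_contract_add (M := M) h1
          omega
        · rw [pow_one, hcontr1 S h1 hr hSE, mul_zero, coeff_zero]
    -- coefficient zero of Q
    have hQ0 : Q.coeff 0 = if L = ∅ then 0 else 1 := by
      rw [hQdef, finset_sum_coeff]
      rcases em (L = ∅) with hL | hL
      · rw [if_pos hL]
        apply Finset.sum_eq_zero
        intro S hS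
        obtain ⟨h1, h2⟩ := hmem S hS
        have := hrkle S h1
        interval_cases hr : rk M (S : Set α)
        · exfalso
          have hSL : (S : Set α) ⊆ L := (rk_eq_zero_iff h1).mp hr
          rw [hL, Set.subset_empty_iff] at hSL
          apply h2
          apply Finset.coe_injective
          rw [hSL, Finset.coe_empty]
        · rw [pow_one, mul_coeff_zero, coeff_X_zero, zero_mul]
      · rw [if_neg hL]
        have hLmem : L.toFinite.toFinset ∈ (M.E.toFinite.toFinset.powerset).erase ∅ := by
          rw [Finset.mem_erase, Finset.mem_powerset]
          constructor
          · rw [Ne, Set.Finite.toFinset_eq_empty]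
            exact hL
          · intro x hx
            rw [Set.Finite.mem_toFinset] at hx ⊢
            exact hLE hx
        have hLcoe : ((L.toFinite.toFinset : Finset α) : Set α) = L := Set.Finite.coe_toFinset _
        rw [Finset.sum_eq_single_of_mem _ hLmem]
        · have hrk0 : rk M ((L.toFinite.toFinset : Finset α) : Set α) = 0 := by
            rw [hLcoe]
            rw [rk_eq_zero_iff hLE]
          have hLne : L.toFinite.toFinset ≠ ∅ := by
            rw [Ne, Set.Finite.toFinset_eq_empty]
            exact hL
          rw [hcontr0 _ (by rw [hLcoe]; exact hLE) hLne hrk0, hrk0, pow_zero, one_mul]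
          rw [if_pos hLcoe]
          simp
        · intro S hS hSne
          obtain ⟨h1, h2⟩ := hmem S hS
          have := hrkle S h1
          interval_cases hr : rk M (S : Set α)
          · rw [hcontr0 S h1 h2 hr, pow_zero, one_mul]
            have : (S : Set α) ≠ L := by
              intro hh
              apply hSne
              apply Finset.coe_injective
              rw [hh, hLcoe]
            rw [if_neg this]
            simp
          · rw [pow_one, mul_coeff_zero, coeff_X_zero, zero_mul]
    rw [hPM, hPhi1, hQ1, hQ0]
    rcases em (L = ∅) with hL | hL
    · rw [if_pos hL, if_pos hL]
      norm_num
    · rw [if_neg hL, if_neg hL]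
      norm_num

end Extraction



section Structure

open scoped Classical

variable {M Mt : Matroid α} {H S T I J B D F X : Set α} {x : α}

lemma stressed_ground (hSt : Stressed M H) : H ⊆ M.E := hSt.1.1.subset_ground

lemma indep_of_subset_H (hSt : Stressed M H) (hkh : rank M ≤ H.ncard)
    (hS : S ⊆ H) (hc : S.ncard < rank M) : M.Indep S := by
  obtain ⟨T, hST, hTH, hTc⟩ := Set.exists_subsuperset_card_eq hS hc.le hkh
  have hcirc := hSt.2 T hTH hTc
  refine hcirc.2 S ⟨hST, fun heq ↦ ?_⟩
  have := Set.ncard_le_ncard heq (Set.toFinite S)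
  omega

lemma rk_H (hSt : Stressed M H) (hk : 1 ≤ rank M) (hkh : rank M ≤ H.ncard) :
    rk M H + 1 = rank M := by
  have hHE := stressed_ground hSt
  have hle : rk M H ≤ rank M := rk_le_rank M hHE
  have hne : rk M H ≠ rank M := by
    intro heq
    obtain ⟨I, hI⟩ := M.exists_isBasis H hHE
    have hIc : I.ncard = rank M := by rw [Basis_ncard hI, heq]
    have hIbase : M.IsBase I := base_of_ncard_rank hI.indep hIc
    have h1 : M.E ⊆ H := by
      rw [← hIbase.closure_eq]
      have := M.closure_subset_closure hI.subset
      rwa [hSt.1.1.closure] at this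
    exact hSt.1.2.1 (le_antisymm hHE h1)
  have hge : rank M ≤ rk M H + 1 := by
    obtain ⟨D, hDH, hDc⟩ := Set.exists_subset_card_eq (show rank M - 1 ≤ H.ncard by omega)
    have hDi : M.Indep D := indep_of_subset_H hSt hkh hDH (by omega)
    have := le_rk hDH hDi
    omega
  omega

lemma closure_eq_H (hSt : Stressed M H) (hk : 1 ≤ rank M) (hkh : rank M ≤ H.ncard)
    (hS : S ⊆ H) (hrkS : rk M S + 1 = rank M) : M.closure S = H := by
  have hHE := stressed_ground hSt
  have hSE := hS.trans hHE
  apply le_antisymm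
  · have := M.closure_subset_closure hS
    rwa [hSt.1.1.closure] at this
  · intro x hx
    by_contra hxc
    have h1 : ¬ rk M (insert x S) = rk M S :=
      fun hh ↦ hxc ((mem_closure_iff_rk hSE (hHE hx)).mpr hh)
    have h2 := rk_insert_le M x S
    have h3 : rk M (insert x S) ≤ rk M H := rk_mono M (Set.insert_subset hx hS)
    have h4 := rk_H hSt hk hkh
    have h5 : rk M S ≤ rk M (insert x S) := rk_mono M (Set.subset_insert _ _)
    omega

lemma base_insert_of (hSt : Stressed M H) (hk : 1 ≤ rank M) (hkh : rank M ≤ H.ncard)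
    (hD : D ⊆ H) (hDi : M.Indep D) (hDc : D.ncard + 1 = rank M) (hx : x ∈ M.E \ H) :
    M.IsBase (insert x D) := by
  have hclD : M.closure D = H := by
    apply closure_eq_H hSt hk hkh hD
    rw [indep_rk_self hDi]
    omega
  have hxD : x ∉ D := fun h ↦ hx.2 (hD h)
  have hind : M.Indep (insert x D) := by
    rw [hDi.insert_indep_iff_of_notMem hxD, hclD]
    exact ⟨hx.1, hx.2⟩
  apply base_of_ncard_rank hind
  rw [Set.ncard_insert_of_notMem hxD (Set.toFinite D)]
  omega

lemma indep_relax (hRel : IsRelaxation M Mt H) (hI : M.Indep I) : Mt.Indep I := by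
  obtain ⟨B, hB, hIB⟩ := hI.exists_isBase_superset
  exact Matroid.Indep.subset ((hRel.2 B).mpr (Or.inl hB)).indep hIB

lemma relax_indep_iff (hkh : rank M ≤ H.ncard) (hRel : IsRelaxation M Mt H) :
    Mt.Indep I ↔ M.Indep I ∨ (I ⊆ H ∧ I.ncard ≤ rank M) := by
  constructor
  · intro hI
    obtain ⟨B, hB, hIB⟩ := hI.exists_isBase_superset
    rcases (hRel.2 B).mp hB with hB' | ⟨hBH, hBc⟩
    · exact Or.inl (hB'.indep.subset hIB)
    · exact Or.inr ⟨hIB.trans hBH, by rw [← hBc]; exact Set.ncard_le_ncard hIB (Set.toFinite B)⟩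
  · rintro (hI | ⟨hIH, hIc⟩)
    · exact indep_relax hRel hI
    · obtain ⟨T, hIT, hTH, hTc⟩ := Set.exists_subsuperset_card_eq hIH hIc hkh
      have hTbase : Mt.IsBase T := (hRel.2 T).mpr (Or.inr ⟨hTH, hTc⟩)
      exact hTbase.indep.subset hIT

lemma relax_rank (hRel : IsRelaxation M Mt H) : rank Mt = rank M := by
  obtain ⟨B, hB⟩ := Mt.exists_isBase
  rcases (hRel.2 B).mp hB with h | ⟨h1, h2⟩
  · rw [← base_ncard (M := Mt) hB, base_ncard h]
  · rw [← base_ncard (M := Mt) hB, h2]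

lemma rk_sub_H_big (hSt : Stressed M H) (hk : 1 ≤ rank M) (hkh : rank M ≤ H.ncard)
    (hT : T ⊆ H) (hc : rank M ≤ T.ncard) : rk M T + 1 = rank M := by
  have h1 : rk M T ≤ rk M H := rk_mono M hT
  have h2 := rk_H hSt hk hkh
  obtain ⟨D, hDT, hDc⟩ := Set.exists_subset_card_eq (show rank M - 1 ≤ T.ncard by omega)
  have hDi : M.Indep D := indep_of_subset_H hSt hkh (hDT.trans hT) (by omega)
  have h3 := le_rk hDT hDi
  omega

lemma rk_relax_small (hSt : Stressed M H) (hkh : rank M ≤ H.ncard)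
    (hRel : IsRelaxation M Mt H) (hT : T ⊆ H) (hc : T.ncard < rank M) :
    rk Mt T = T.ncard ∧ rk M T = T.ncard := by
  have hTi : M.Indep T := indep_of_subset_H hSt hkh hT hc
  have h1 : rk M T = T.ncard := indep_rk_self hTi
  have h2 : rk Mt T = T.ncard := indep_rk_self (indep_relax hRel hTi)
  exact ⟨h2, h1⟩

lemma rk_relax_big (hSt : Stressed M H) (hkh : rank M ≤ H.ncard)
    (hRel : IsRelaxation M Mt H) (hT : T ⊆ H) (hc : rank M ≤ T.ncard) :
    rk Mt T = rank M := by
  have hHE := stressed_ground hSt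
  have hTMt : T ⊆ Mt.E := by rw [hRel.1]; exact hT.trans hHE
  have hle : rk Mt T ≤ rank Mt := rk_le_rank Mt hTMt
  rw [relax_rank hRel] at hle
  obtain ⟨D, hDT, hDc⟩ := Set.exists_subset_card_eq (show rank M ≤ T.ncard from hc)
  have hDi : Mt.Indep D := by
    rw [relax_indep_iff hkh hRel]
    exact Or.inr ⟨hDT.trans hT, hDc.le⟩
  have := le_rk hDT hDi
  omega

lemma rk_relax_not_sub (hSt : Stressed M H) (hk : 1 ≤ rank M) (hkh : rank M ≤ H.ncard)
    (hRel : IsRelaxation M Mt H) (hT : T ⊆ M.E) (hTH : ¬ T ⊆ H) :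
    rk Mt T = rk M T := by
  have hHE := stressed_ground hSt
  obtain ⟨x, hxT, hxH⟩ := Set.not_subset.mp hTH
  apply le_antisymm
  · obtain ⟨I, hIT, hIi, hIc⟩ := rk_spec Mt T
    rcases (relax_indep_iff hkh hRel).mp hIi with hIM | ⟨hIH, hIk⟩
    · rw [← hIc]; exact le_rk hIT hIM
    · rcases Nat.lt_or_ge I.ncard (rank M) with hlt | hge
      · rw [← hIc]
        exact le_rk hIT (indep_of_subset_H hSt hkh hIH hlt)
      · -- rk Mt T ≤ rank M ≤ rk M T
        have hle : rk Mt T ≤ rank M := by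
          have := rk_le_rank Mt (show T ⊆ Mt.E by rw [hRel.1]; exact hT)
          rwa [relax_rank hRel] at this
        obtain ⟨D, hDI, hDc⟩ := Set.exists_subset_card_eq (show rank M - 1 ≤ I.ncard by omega)
        have hDi : M.Indep D := indep_of_subset_H hSt hkh (hDI.trans hIH) (by omega)
        have hbase : M.IsBase (insert x D) :=
          base_insert_of hSt hk hkh (hDI.trans hIH) hDi (by omega) ⟨hT hxT, hxH⟩
        have hsub : insert x D ⊆ T := Set.insert_subset hxT ((hDI.trans hIT))
        have h1 := le_rk hsub hbase.indep
        have h2 : (insert x D).ncard = rank M := base_ncard hbase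
        omega
  · obtain ⟨I, hIT, hIi, hIc⟩ := rk_spec M T
    rw [← hIc]
    exact le_rk hIT (indep_relax hRel hIi)

lemma contract_relax_eq (hSt : Stressed M H) (hk : 1 ≤ rank M) (hkh : rank M ≤ H.ncard)
    (hRel : IsRelaxation M Mt H) (hS : S ⊆ M.E) (hSH : ¬ S ⊆ H) :
    (Mt ⧸ S) = (M ⧸ S) := by
  have hHE := stressed_ground hSt
  have hSMt : S ⊆ Mt.E := by rw [hRel.1]; exact hS
  obtain ⟨x, hxS, hxH⟩ := Set.not_subset.mp hSH
  have hclH : ∀ J : Set α, J ⊆ H → M.closure J ⊆ H := by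
    intro J hJ
    have := M.closure_subset_closure hJ
    rwa [hSt.1.1.closure] at this
  have basis_transfer : ∀ J, M.IsBasis J S → Mt.IsBasis J S := by
    intro J hJ
    have hJi : Mt.Indep J := indep_relax hRel hJ.indep
    rw [Matroid.isBasis_iff hSMt]
    refine ⟨hJi, hJ.subset, fun J' hJ' hJJ' hJ'S ↦ ?_⟩
    rcases (relax_indep_iff hkh hRel).mp hJ' with h | ⟨hJ'H, -⟩
    · exact hJ.eq_of_subset_indep h hJJ' hJ'S
    · exfalso
      have hJH : J ⊆ H := hJJ'.trans hJ'H
      exact hxH (hclH J hJH (hJ.subset_closure hxS))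
  apply Matroid.ext_isBase
    (by rw [contract_ground, contract_ground, hRel.1])
  intro B hB
  rw [contract_base_iff hSMt, contract_base_iff hS, hRel.1]
  constructor
  · rintro ⟨hBR, J, hJt, hBJt⟩
    rcases em (M.Indep J) with hJi | hJd
    · have hJM : M.IsBasis J S := by
        rw [Matroid.isBasis_iff hS]
        exact ⟨hJi, hJt.subset, fun J' hJ' hJJ' hJ'S ↦
          hJt.eq_of_subset_indep (indep_relax hRel hJ') hJJ' hJ'S⟩
      rcases (hRel.2 _).mp hBJt with hBJ | ⟨hBH, hBc⟩
      · exact ⟨hBR, J, hJM, hBJ⟩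
      · exfalso
        have hJH : J ⊆ H := (Set.subset_union_right).trans hBH
        have hxJ : x ∉ J := fun hh ↦ hxH (hJH hh)
        have hxcl : x ∉ M.closure J := fun hc ↦ hxH (hclH J hJH hc)
        have hins : M.Indep (insert x J) := by
          rw [hJi.insert_indep_iff_of_notMem hxJ]
          exact ⟨hS hxS, hxcl⟩
        exact hxJ (hJt.mem_of_insert_indep hxS (indep_relax hRel hins))
    · rcases (relax_indep_iff hkh hRel).mp hJt.indep with h | ⟨hJH, hJc⟩
      · exact absurd h hJd
      have hJcc : J.ncard = rank M := by
        rcases Nat.lt_or_ge J.ncard (rank M) with hlt | hge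
        · exact absurd (indep_of_subset_H hSt hkh hJH hlt) hJd
        · omega
      rcases (hRel.2 _).mp hBJt with hBJ | ⟨hBH, hBc⟩
      · exact absurd (hBJ.indep.subset Set.subset_union_right) hJd
      · have hJBJ : J = B ∪ J := by
          apply Set.eq_of_subset_of_ncard_le Set.subset_union_right _ (Set.toFinite _)
          omega
        have hBempty : B = ∅ := by
          rw [Set.eq_empty_iff_forall_notMem]
          intro y hy
          have hyJ : y ∈ J := by rw [hJBJ]; exact Or.inl hy
          exact (hBR hy).2 (hJt.subset hyJ)
        subst hBempty
        have hrkS : rk M S = rank M := by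
          obtain ⟨D, hDJ, hDc⟩ := Set.exists_subset_card_eq (show rank M - 1 ≤ J.ncard by omega)
          have hDH : D ⊆ H := hDJ.trans hJH
          have hDi : M.Indep D := indep_of_subset_H hSt hkh hDH (by omega)
          have hbase : M.IsBase (insert x D) :=
            base_insert_of hSt hk hkh hDH hDi (by omega) ⟨hS hxS, hxH⟩
          have hsub : insert x D ⊆ S := Set.insert_subset hxS (hDJ.trans hJt.subset)
          have h1 := le_rk hsub hbase.indep
          have h2 : (insert x D).ncard = rank M := base_ncard hbase
          have h3 := rk_le_rank M hS
          omega
        have hr0 : rank (M ⧸ S) = 0 := by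
          have := rank_contract_add hS
          omega
        have hBase := rank_eq_zero_base_empty (M := M ⧸ S) hr0
        rwa [contract_base_iff hS] at hBase
  · rintro ⟨hBR, J, hJ, hBJ⟩
    exact ⟨hBR, J, basis_transfer J hJ, (hRel.2 _).mpr (Or.inl hBJ)⟩

end Structure


section Structure2

open scoped Classical

variable {M Mt : Matroid α} {H S T I J B D F X : Set α} {x : α}
variable {P Z : Matroid α → Polynomial ℤ}

lemma exists_outside (hSt : Stressed M H) : ∃ x, x ∈ M.E ∧ x ∉ H := by
  obtain ⟨x, hx1, hx2⟩ := Set.exists_of_ssubset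
    (ssubset_of_subset_of_ne (stressed_ground hSt) hSt.1.2.1)
  exact ⟨x, hx1, hx2⟩

lemma contract_stressed (hSt : Stressed M H) (hk : 1 ≤ rank M) (hkh : rank M ≤ H.ncard)
    (hRel : IsRelaxation M Mt H) (hS : S ⊆ H) (hSc : S.ncard < rank M) :
    Stressed (M ⧸ S) (H \ S) ∧ IsRelaxation (M ⧸ S) (Mt ⧸ S) (H \ S) ∧
      rank (M ⧸ S) + S.ncard = rank M ∧ (H \ S).ncard + S.ncard = H.ncard := by
  have hHE := stressed_ground hSt
  have hSE : S ⊆ M.E := hS.trans hHE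
  have hSi : M.Indep S := indep_of_subset_H hSt hkh hS hSc
  have hSmti : Mt.Indep S := indep_relax hRel hSi
  have hSMt : S ⊆ Mt.E := by rw [hRel.1]; exact hSE
  have hrkS : rk M S = S.ncard := indep_rk_self hSi
  have hrkc : rank (M ⧸ S) + S.ncard = rank M := by
    have := rank_contract_add hSE
    omega
  have hdisj : ∀ B : Set α, B ⊆ M.E \ S → Disjoint B S :=
    fun B hB ↦ Set.disjoint_of_subset_left hB Set.disjoint_sdiff_left
  have hcard : (H \ S).ncard + S.ncard = H.ncard := by
    rw [Set.ncard_diff hS (Set.toFinite _)]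
    have := Set.ncard_le_ncard hS (Set.toFinite H)
    omega
  refine ⟨⟨⟨flat_contract hSE hSt.1.1 hS, ?_, ?_⟩, ?_⟩, ⟨?_, ?_⟩, hrkc, hcard⟩
  · -- H \ S ≠ (M ⧸ S).E
    obtain ⟨x, hxE, hxH⟩ := exists_outside hSt
    intro heq
    have hxS : x ∉ S := fun hh ↦ hxH (hS hh)
    have : x ∈ H \ S := by
      rw [heq, contract_ground]
      exact ⟨hxE, hxS⟩
    exact hxH this.1
  · -- maximality
    intro F hF hHF
    have hFE : F ⊆ M.E \ S := hF.subset_ground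
    have hFS : Disjoint F S := hdisj F hFE
    have hclF : M.closure (F ∪ S) \ S = F := by
      have := closure_contract hSE hFE
      rw [hF.closure] at this
      exact this.symm
    have hFflat : M.IsFlat (F ∪ S) := by
      rw [flat_iff_closure_self]
      have hFSE : F ∪ S ⊆ M.E := Set.union_subset (hFE.trans Set.diff_subset) hSE
      refine ⟨hFSE, le_antisymm ?_ (M.subset_closure _ hFSE)⟩
      intro y hy
      rcases em (y ∈ S) with h | h
      · exact Or.inr h
      · exact Or.inl (by rw [← hclF]; exact ⟨hy, h⟩)
    have hHF' : H ⊂ F ∪ S := by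
      constructor
      · rw [← Set.diff_union_of_subset hS]
        exact Set.union_subset_union_left S hHF.subset
      · intro hsub
        obtain ⟨y, hyF, hyH⟩ := Set.exists_of_ssubset hHF
        have hyS : y ∉ S := (hFE hyF).2
        have : y ∉ H := fun hh ↦ hyH ⟨hh, hyS⟩
        exact this (hsub (Or.inl hyF))
    have hFSE := hSt.1.2.2 (F ∪ S) hFflat hHF'
    have : F = (F ∪ S) \ S := by
      ext y
      constructor
      · intro hy
        exact ⟨Or.inl hy, (hFE hy).2⟩
      · rintro ⟨hy | hy, hyS⟩
        · exact hy
        · exact absurd hy hyS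
    rw [this, hFSE, contract_ground]
  · -- stressed circuits
    intro C hC hCc
    have hCsub : C ⊆ M.E \ S := hC.trans (Set.diff_subset_diff_left hHE)
    have hCS : Disjoint C S := hdisj C hCsub
    have hCH : C ∪ S ⊆ H := Set.union_subset (hC.trans Set.diff_subset) hS
    have hCU : (C ∪ S).ncard = rank M := by
      rw [Set.ncard_union_eq hCS (Set.toFinite C) (Set.toFinite S)]
      omega
    have hcirc := hSt.2 (C ∪ S) hCH hCU
    constructor
    · refine ⟨fun hi ↦ ?_, hCsub⟩
      rw [contract_indep_iff_of_indep hSi] at hi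
      exact hcirc.1.1 hi.2
    · intro D' hD'
      rw [contract_indep_iff_of_indep hSi]
      refine ⟨hD'.subset.trans hCsub, ?_⟩
      refine hcirc.2 (D' ∪ S) ⟨Set.union_subset_union_left S hD'.subset, fun heq ↦ ?_⟩
      have hD'S : Disjoint D' S := hdisj D' (hD'.subset.trans hCsub)
      have h1 := Set.ncard_lt_ncard hD' (Set.toFinite C)
      have h2 : (D' ∪ S).ncard = D'.ncard + S.ncard :=
        Set.ncard_union_eq hD'S (Set.toFinite D') (Set.toFinite S)
      have h3 := Set.ncard_le_ncard heq (Set.toFinite _)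
      omega
  · -- ground sets of the relaxation
    rw [contract_ground, contract_ground, hRel.1]
  · -- bases of the relaxation
    intro B
    rw [contract_base_iff_of_indep hSmti, contract_base_iff_of_indep hSi, hRel.1, hRel.2 (B ∪ S)]
    constructor
    · rintro ⟨hB, hbase | ⟨hBH, hBc⟩⟩
      · exact Or.inl ⟨hB, hbase⟩
      · refine Or.inr ⟨fun y hy ↦ ⟨hBH (Or.inl hy), (hB hy).2⟩, ?_⟩
        have hBS : Disjoint B S := hdisj B hB
        have h2 : (B ∪ S).ncard = B.ncard + S.ncard :=
          Set.ncard_union_eq hBS (Set.toFinite B) (Set.toFinite S)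
        omega
    · rintro (⟨hB, hbase⟩ | ⟨hBH, hBc⟩)
      · exact ⟨hB, Or.inl hbase⟩
      · have hB : B ⊆ M.E \ S := hBH.trans (Set.diff_subset_diff_left hHE)
        have hBS : Disjoint B S := hdisj B hB
        refine ⟨hB, Or.inr ⟨Set.union_subset (hBH.trans Set.diff_subset) hS, ?_⟩⟩
        have h2 : (B ∪ S).ncard = B.ncard + S.ncard :=
          Set.ncard_union_eq hBS (Set.toFinite B) (Set.toFinite S)
        omega

lemma P_contract_big (hPZ : PZaxioms P Z) (hSt : Stressed M H) (hk : 1 ≤ rank M)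
    (hkh : rank M ≤ H.ncard) (hRel : IsRelaxation M Mt H) (hS : S ⊆ H)
    (hSc : rank M ≤ S.ncard) :
    P (Mt ⧸ S) = 0 ∧ P (M ⧸ S) = (if S = H then 1 else 0) := by
  have hHE := stressed_ground hSt
  have hSE : S ⊆ M.E := hS.trans hHE
  have hSMt : S ⊆ Mt.E := by rw [hRel.1]; exact hSE
  obtain ⟨x, hxE, hxH⟩ := exists_outside hSt
  have hxS : x ∉ S := fun hh ↦ hxH (hS hh)
  have hgne : (M ⧸ S).E ≠ ∅ := by
    rw [contract_ground]
    intro hempty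
    have : x ∈ M.E \ S := ⟨hxE, hxS⟩
    rw [hempty] at this
    exact this
  have hgtne : (Mt ⧸ S).E ≠ ∅ := by
    rw [contract_ground, hRel.1]
    intro hempty
    have : x ∈ M.E \ S := ⟨hxE, hxS⟩
    rw [hempty] at this
    exact this
  constructor
  · -- P (Mt ⧸ S) = 0
    apply P_rank_zero hPZ _ hgtne
    have h1 := rank_contract_add (M := Mt) hSMt
    rw [rk_relax_big hSt hkh hRel hS hSc, relax_rank hRel] at h1
    omega
  · -- P (M ⧸ S)
    have hrkS := rk_sub_H_big hSt hk hkh hS hSc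
    have hrc : rank (M ⧸ S) = 1 := by
      have := rank_contract_add hSE
      omega
    have hloops : (M ⧸ S).closure ∅ = H \ S := by
      rw [closure_contract hSE (by simp), Set.empty_union,
        closure_eq_H hSt hk hkh hS hrkS]
    have := P_rank_one hPZ (M ⧸ S).E.ncard (M ⧸ S) le_rfl hrc hgne
    rw [hloops] at this
    rw [this]
    have hiff : H \ S = ∅ ↔ S = H := by
      rw [Set.diff_eq_empty]
      exact ⟨fun hh ↦ le_antisymm hS hh, fun hh ↦ hh.ge⟩
    rcases em (S = H) with h | h
    · rw [if_pos h, if_pos (hiff.mpr h)]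
    · rw [if_neg h, if_neg (fun hh ↦ h (hiff.mp hh))]

end Structure2


section Main

open scoped Classical

lemma Phi_add (k : ℕ) (q r : Polynomial ℤ) : Phi k (q + r) = Phi k q + Phi k r := by
  ext i
  simp only [Phi_coeff, coeff_add]
  split <;> ring

lemma Phi_zero_left (q : Polynomial ℤ) : Phi 0 q = 0 := by
  rw [Phi]
  simp

/-- Fuel-based auxiliary recursion for the relaxation polynomial. -/
noncomputable def pPaux : ℕ → ℕ → ℕ → Polynomial ℤ
  | 0, _, _ => 0
  | (fuel + 1), k, h =>
      Phi k ((∑ i ∈ Finset.Icc 1 (k - 1),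
        Polynomial.C ((h.choose i : ℤ)) * (X ^ i * pPaux fuel (k - i) (h - i))) - X ^ (k - 1))

lemma pPaux_irrel : ∀ f1 f2 k h : ℕ, k ≤ f1 → k ≤ f2 → pPaux f1 k h = pPaux f2 k h := by
  intro f1
  induction f1 with
  | zero =>
    intro f2 k h h1 h2
    have hk0 : k = 0 := Nat.le_zero.mp h1
    subst hk0
    cases f2 with
    | zero => rfl
    | succ g => rw [pPaux, pPaux, Phi_zero_left]
  | succ g ihg =>
    intro f2 k h h1 h2
    cases f2 with
    | zero =>
      have hk0 : k = 0 := Nat.le_zero.mp h2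
      subst hk0
      rw [pPaux, pPaux, Phi_zero_left]
    | succ g2 =>
      rw [pPaux, pPaux]
      congr 2
      apply Finset.sum_congr rfl
      intro i hi
      rw [Finset.mem_Icc] at hi
      rw [ihg g2 (k - i) (h - i) (by omega) (by omega)]

/-- The relaxation polynomial `p_{k,h}`. -/
noncomputable def pP (k h : ℕ) : Polynomial ℤ := pPaux k k h

lemma pP_eq (k h : ℕ) :
    pP k h = Phi k ((∑ i ∈ Finset.Icc 1 (k - 1),
      Polynomial.C ((h.choose i : ℤ)) * (X ^ i * pP (k - i) (h - i))) - X ^ (k - 1)) := by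
  rw [pP, pPaux_irrel k (k + 1) k h le_rfl (Nat.le_succ k), pPaux]
  congr 2
  apply Finset.sum_congr rfl
  intro i hi
  rw [Finset.mem_Icc] at hi
  rw [pP, pPaux_irrel k (k - i) (k - i) (h - i) (by omega) le_rfl]

/-- The function of the cardinality appearing in the key sum computation. -/
noncomputable def Gfun (k h j : ℕ) : Polynomial ℤ :=
  if j = 0 then 0
  else if j < k then X ^ j * pP (k - j) (h - j)
  else if j = h then -X ^ (k - 1) else 0

end Main

section MainProof

open scoped Classical

variable {β : Type} [Fintype β] {P Z : Matroid β → Polynomial ℤ}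

lemma key_sum (hPZ : PZaxioms P Z) {M Mt : Matroid β} {H : Set β} {n k h : ℕ}
    (ih : ∀ (M' Mt' : Matroid β) (H' : Set β), M'.E.ncard ≤ n → 1 ≤ rank M' →
      rank M' ≤ H'.ncard → Stressed M' H' → IsRelaxation M' Mt' H' →
      P Mt' = P M' + pP (rank M') H'.ncard)
    (hn : M.E.ncard ≤ n + 1) (hkdef : rank M = k) (hhdef : H.ncard = h)
    (hk : 1 ≤ k) (hkh : k ≤ h) (hSt : Stressed M H) (hRel : IsRelaxation M Mt H) :
    (∑ S ∈ (M.E.toFinite.toFinset.powerset).erase ∅,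
        X ^ (rk Mt (S : Set β)) * P (Mt ⧸ (S : Set β)))
      = (∑ S ∈ (M.E.toFinite.toFinset.powerset).erase ∅,
          X ^ (rk M (S : Set β)) * P (M ⧸ (S : Set β)))
        + ((∑ i ∈ Finset.Icc 1 (k - 1),
            Polynomial.C ((h.choose i : ℤ)) * (X ^ i * pP (k - i) (h - i))) - X ^ (k - 1)) := by
  have hHE := stressed_ground hSt
  have hk' : 1 ≤ rank M := by omega
  have hkh' : rank M ≤ H.ncard := by omega
  rw [← sub_eq_iff_eq_add']
  rw [← Finset.sum_sub_distrib]
  set HF := H.toFinite.toFinset with hHFdef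
  have hHFcard : HF.card = h := by
    rw [← hhdef, Set.ncard_eq_toFinset_card H H.toFinite]
  have hHFsub : HF.powerset.erase ∅ ⊆ (M.E.toFinite.toFinset.powerset).erase ∅ := by
    intro S hS
    rw [Finset.mem_erase, Finset.mem_powerset] at hS ⊢
    refine ⟨hS.1, hS.2.trans ?_⟩
    intro y hy
    rw [Set.Finite.mem_toFinset] at hy ⊢
    exact hHE hy
  rw [← Finset.sum_subset hHFsub ?_]
  swap
  · intro S hS hS2
    rw [Finset.mem_erase, Finset.mem_powerset] at hS
    have hSE : (S : Set β) ⊆ M.E := by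
      intro y hy
      have := hS.2 (Finset.mem_coe.mp hy)
      rwa [Set.Finite.mem_toFinset] at this
    have hnsub : ¬ (S : Set β) ⊆ H := by
      intro hsub
      apply hS2
      rw [Finset.mem_erase, Finset.mem_powerset]
      refine ⟨hS.1, fun y hy ↦ ?_⟩
      rw [Set.Finite.mem_toFinset]
      exact hsub (Finset.mem_coe.mpr hy)
    rw [rk_relax_not_sub hSt hk' hkh' hRel hSE hnsub,
      contract_relax_eq hSt hk' hkh' hRel hSE hnsub, sub_self]
  -- reduce to subsets of H
  have hFG : ∀ S ∈ HF.powerset,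
      (if S = (∅ : Finset β) then 0
        else X ^ (rk Mt (S : Set β)) * P (Mt ⧸ (S : Set β))
          - X ^ (rk M (S : Set β)) * P (M ⧸ (S : Set β)))
      = Gfun k h S.card := by
    intro S hS
    rw [Finset.mem_powerset] at hS
    rcases em (S = (∅ : Finset β)) with hSe | hSe
    · subst hSe
      simp [Gfun]
    · rw [if_neg hSe]
      have hc0 : S.card ≠ 0 := fun hh ↦ hSe (Finset.card_eq_zero.mp hh)
      have hsub : (S : Set β) ⊆ H := by
        intro y hy
        have := hS (Finset.mem_coe.mp hy)
        rwa [Set.Finite.mem_toFinset] at this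
      have hcard : (S : Set β).ncard = S.card := Set.ncard_coe_finset S
      rcases Nat.lt_or_ge S.card k with hlt | hge
      · -- small subsets: use the induction hypothesis
        have hsmall := rk_relax_small hSt hkh' hRel hsub (by omega)
        obtain ⟨hstr, hrel', hrkc, hcardc⟩ :=
          contract_stressed hSt hk' hkh' hRel hsub (by omega)
        have hcount : (M ⧸ (S : Set β)).E.ncard ≤ n := by
          rw [contract_ground, Set.ncard_diff (hsub.trans hHE) (Set.toFinite _)]
          omega
        have hih := ih (M ⧸ (S : Set β)) (Mt ⧸ (S : Set β)) (H \ (S : Set β)) hcount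
          (by omega) (by omega) hstr hrel'
        have hr1 : rank (M ⧸ (S : Set β)) = k - S.card := by omega
        have hr2 : (H \ (S : Set β)).ncard = h - S.card := by omega
        rw [hr1, hr2] at hih
        rw [hsmall.1, hsmall.2, hcard, hih, Gfun, if_neg hc0, if_pos hlt]
        ring
      · -- large subsets
        have hSc' : rank M ≤ (S : Set β).ncard := by omega
        have hPb := P_contract_big hPZ hSt hk' hkh' hRel hsub hSc'
        have hrkM' := rk_sub_H_big hSt hk' hkh' hsub hSc'
        have hrkeq : rk M (S : Set β) = k - 1 := by omega
        have hnotlt : ¬ S.card < k := by omega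
        rw [hPb.1, hPb.2, hrkeq, mul_zero, zero_sub, Gfun, if_neg hc0, if_neg hnotlt]
        rcases em ((S : Set β) = H) with hSH | hSH
        · have hch : S.card = h := by
            rw [← hcard, hSH, hhdef]
          rw [if_pos hSH, if_pos hch, mul_one]
        · have hch : S.card ≠ h := by
            intro hh
            apply hSH
            have hSHF : S = HF := Finset.eq_of_subset_of_card_le hS (by omega)
            rw [hSHF, hHFdef, Set.Finite.coe_toFinset]
          rw [if_neg hSH, if_neg hch, mul_zero, neg_zero]
  -- pass to the if-version and sum over the full powerset
  rw [show (∑ S ∈ HF.powerset.erase ∅,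
      (X ^ (rk Mt (S : Set β)) * P (Mt ⧸ (S : Set β))
        - X ^ (rk M (S : Set β)) * P (M ⧸ (S : Set β))))
    = ∑ S ∈ HF.powerset,
      (if S = (∅ : Finset β) then 0
        else X ^ (rk Mt (S : Set β)) * P (Mt ⧸ (S : Set β))
          - X ^ (rk M (S : Set β)) * P (M ⧸ (S : Set β))) from ?_]
  swap
  · rw [← Finset.sum_erase HF.powerset (by rw [if_pos rfl])]
    apply Finset.sum_congr rfl
    intro S hS
    rw [Finset.mem_erase] at hS
    rw [if_neg hS.1]
  rw [Finset.sum_congr rfl hFG]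
  rw [Finset.sum_powerset_apply_card (Gfun k h), hHFcard]
  -- evaluate the choose-weighted sum
  have hins : insert h (Finset.Icc 1 (k - 1)) ⊆ Finset.range (h + 1) := by
    intro j hj
    rw [Finset.mem_insert, Finset.mem_Icc] at hj
    rw [Finset.mem_range]
    omega
  rw [← Finset.sum_subset hins ?_]
  swap
  · intro j hj hj2
    rw [Finset.mem_range] at hj
    rw [Finset.mem_insert, Finset.mem_Icc] at hj2
    push_neg at hj2
    have hG0 : Gfun k h j = 0 := by
      rcases em (j = 0) with h0 | h0
      · rw [Gfun, if_pos h0]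
      · rw [Gfun, if_neg h0, if_neg (by omega), if_neg hj2.1]
    rw [hG0, smul_zero]
  rw [Finset.sum_insert (by rw [Finset.mem_Icc]; omega)]
  have hGh : Gfun k h h = -X ^ (k - 1) := by
    rw [Gfun, if_neg (by omega), if_neg (by omega), if_pos rfl]
  rw [hGh, Nat.choose_self, one_smul]
  have hcong : ∀ j ∈ Finset.Icc 1 (k - 1), (h.choose j) • Gfun k h j
      = Polynomial.C ((h.choose j : ℤ)) * (X ^ j * pP (k - j) (h - j)) := by
    intro j hj
    rw [Finset.mem_Icc] at hj
    rw [Gfun, if_neg (show ¬ j = 0 by omega), if_pos (show j < k by omega), nsmul_eq_mul,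
      Polynomial.C_eq_natCast]
  rw [Finset.sum_congr rfl hcong, neg_add_eq_sub]

lemma main_aux (hPZ : PZaxioms P Z) :
    ∀ n (M Mt : Matroid β) (H : Set β), M.E.ncard ≤ n → 1 ≤ rank M → rank M ≤ H.ncard →
      Stressed M H → IsRelaxation M Mt H → P Mt = P M + pP (rank M) H.ncard := by
  intro n
  induction n with
  | zero =>
    intro M Mt H hn hk hkh hSt hRel
    exfalso
    have h1 : H.ncard ≤ M.E.ncard := Set.ncard_le_ncard (stressed_ground hSt) (Set.toFinite _)
    omega
  | succ n ih =>
    intro M Mt H hn hk hkh hSt hRel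
    have hHE := stressed_ground hSt
    have hEne : M.E ≠ ∅ := by
      intro hE
      have h2 : H.ncard ≤ M.E.ncard := Set.ncard_le_ncard hHE (Set.toFinite _)
      rw [hE, Set.ncard_empty] at h2
      omega
    have hMtne : Mt.E ≠ ∅ := by rw [hRel.1]; exact hEne
    have hrkMt : rank Mt = rank M := relax_rank hRel
    have hEF : Mt.E.toFinite.toFinset = M.E.toFinite.toFinset := by
      apply Finset.coe_injective
      rw [Set.Finite.coe_toFinset, Set.Finite.coe_toFinset, hRel.1]
    have hPMt : P Mt = Phi (rank M) (∑ S ∈ (M.E.toFinite.toFinset.powerset).erase ∅,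
        X ^ (rk Mt (S : Set β)) * P (Mt ⧸ (S : Set β))) := by
      have := P_eq_Phi hPZ Mt hMtne
      rwa [hrkMt, hEF] at this
    have hPM : P M = Phi (rank M) (∑ S ∈ (M.E.toFinite.toFinset.powerset).erase ∅,
        X ^ (rk M (S : Set β)) * P (M ⧸ (S : Set β))) := P_eq_Phi hPZ M hEne
    have hkey := key_sum hPZ ih hn rfl rfl hk hkh hSt hRel
    rw [hPMt, hkey, Phi_add, ← hPM, ← pP_eq]

end MainProof


/-- For integers `h ≥ k ≥ 1` there is a polynomial `p_{k,h}(t) ∈ ℤ[t]`,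
depending only on `k` and `h`, such that for every matroid `M` of rank `k`, every
stressed hyperplane `H` of `M` with `|H| = h`, and the relaxation `M̃` of `M` at `H`,
one has `P_{M̃}(t) = P_M(t) + p_{k,h}(t)`. -/
theorem relaxation_KL_polynomial (k h : ℕ) (hk : 1 ≤ k) (hkh : k ≤ h) :
    ∃ p : Polynomial ℤ,
      ∀ (β : Type) [Fintype β],
        ∀ (P Z : Matroid β → Polynomial ℤ), PZaxioms P Z →
          ∀ (M Mt : Matroid β) (H : Set β),
            rank M = k → Stressed M H → H.ncard = h → IsRelaxation M Mt H →
            P Mt = P M + p := by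
  refine ⟨pP k h, ?_⟩
  intro β _ P Z hPZ M Mt H hrk hSt hh hRel
  have := main_aux hPZ M.E.ncard M Mt H le_rfl (by omega) (by rw [hrk, hh]; exact hkh) hSt hRel
  rwa [hrk, hh] at this


end KLPaper
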